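/- (Single-block variance-difference identity.) With β̃ = (1 − e) β(1) + e β(0), the following identity holds: [ S²_{Y(1)}/e + S²_{Y(0)}/(1 − e) − S²_{Y(1)−Y(0)} ] − [ S²_{ε(1)}/e + S²_{ε(0)}/(1 − e) − S²_{ε(1)−ε(0)} ] = β̃ᵀ S²_X β̃ / (e(1 − e)) + 2 ( S_{Xε(1)}/e + S_{Xε(0)}/(1 − e) )ᵀ β̃. -/

import Mathlib

open Finset

/-- **Single-block variance-difference identity.**
A single block of `N ≥ 2` units with covariates `x i : Fin p → ℝ`, potential outcomes
`Y1, Y0`, residuals `ε(z)` from the linear decomposition with coefficients `β(z)`, and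
`β̃ = (1 − e)β(1) + eβ(0)`:
`[S²_{Y(1)}/e + S²_{Y(0)}/(1−e) − S²_{Y(1)−Y(0)}] − [S²_{ε(1)}/e + S²_{ε(0)}/(1−e) −
S²_{ε(1)−ε(0)}] = β̃ᵀS²_Xβ̃/(e(1−e)) + 2(S_{Xε(1)}/e + S_{Xε(0)}/(1−e))ᵀβ̃`. -/
theorem single_block_variance_difference (N p : ℕ) (hN : 2 ≤ N)
    (x : Fin N → Fin p → ℝ) (Y1 Y0 : Fin N → ℝ) (β1 β0 : Fin p → ℝ)
    (e : ℝ) (he0 : 0 < e) (he1 : e < 1) :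
    let xbar : Fin p → ℝ := fun j => (∑ i, x i j) / (N : ℝ)
    let mean : (Fin N → ℝ) → ℝ := fun a => (∑ i, a i) / (N : ℝ)
    let ε1 : Fin N → ℝ := fun i => Y1 i - mean Y1 - ∑ j, (x i j - xbar j) * β1 j
    let ε0 : Fin N → ℝ := fun i => Y0 i - mean Y0 - ∑ j, (x i j - xbar j) * β0 j
    let S2 : (Fin N → ℝ) → ℝ := fun a =>
      (1 / ((N : ℝ) - 1)) * ∑ i, (a i - mean a) ^ 2
    let SX : (Fin N → ℝ) → Fin p → ℝ := fun a j =>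
      (1 / ((N : ℝ) - 1)) * ∑ i, (x i j - xbar j) * (a i - mean a)
    let S2X : Fin p → Fin p → ℝ := fun j l =>
      (1 / ((N : ℝ) - 1)) * ∑ i, (x i j - xbar j) * (x i l - xbar l)
    let βt : Fin p → ℝ := fun j => (1 - e) * β1 j + e * β0 j
    (S2 Y1 / e + S2 Y0 / (1 - e) - S2 (fun i => Y1 i - Y0 i))
        - (S2 ε1 / e + S2 ε0 / (1 - e) - S2 (fun i => ε1 i - ε0 i))
      = (∑ j, ∑ l, βt j * S2X j l * βt l) / (e * (1 - e))
        + 2 * ∑ j, (SX ε1 j / e + SX ε0 j / (1 - e)) * βt j := by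
  intro xbar mean ε1 ε0 S2 SX S2X βt
  have hNR : (2:ℝ) ≤ (N:ℝ) := by exact_mod_cast hN
  have hN0 : (N:ℝ) ≠ 0 := by linarith
  have he : e ≠ 0 := ne_of_gt he0
  have he' : (1:ℝ) - e ≠ 0 := by linarith
  set c : ℝ := 1 / ((N:ℝ) - 1) with hc
  set d : Fin N → Fin p → ℝ := fun i j => x i j - xbar j with hd
  set A : Fin N → ℝ := fun i => ∑ j, d i j * β1 j with hA
  set B : Fin N → ℝ := fun i => ∑ j, d i j * β0 j with hB
  set C : Fin N → ℝ := fun i => ∑ j, d i j * βt j with hC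
  have hdsum : ∀ j, ∑ i, d i j = 0 := by
    intro j
    have : ∑ i, d i j = (∑ i, x i j) - (N:ℝ) * xbar j := by
      simp [hd, Finset.sum_sub_distrib, mul_comm]
    rw [this]
    simp only [xbar]
    field_simp
    ring
  have hA0 : ∑ i, A i = 0 := by
    rw [show ∑ i, A i = ∑ j, (∑ i, d i j) * β1 j by
      rw [Finset.sum_comm (f := fun i j => d i j * β1 j)]
      exact Finset.sum_congr rfl fun j _ => (Finset.sum_mul _ _ _).symm]
    simp [hdsum]
  have hB0 : ∑ i, B i = 0 := by
    rw [show ∑ i, B i = ∑ j, (∑ i, d i j) * β0 j by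
      rw [Finset.sum_comm (f := fun i j => d i j * β0 j)]
      exact Finset.sum_congr rfl fun j _ => (Finset.sum_mul _ _ _).symm]
    simp [hdsum]
  have hε1 : ∀ i, ε1 i = Y1 i - mean Y1 - A i := fun i => rfl
  have hε0 : ∀ i, ε0 i = Y0 i - mean Y0 - B i := fun i => rfl
  have hmeanY1 : (N:ℝ) * mean Y1 = ∑ i, Y1 i := by
    simp only [mean]; field_simp
  have hmeanY0 : (N:ℝ) * mean Y0 = ∑ i, Y0 i := by
    simp only [mean]; field_simp
  have hm1 : mean ε1 = 0 := by
    have hs : ∑ i, ε1 i = 0 := by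
      rw [Finset.sum_congr rfl fun i _ => hε1 i]
      rw [Finset.sum_sub_distrib, Finset.sum_sub_distrib, hA0,
        Finset.sum_const, card_univ, Fintype.card_fin, nsmul_eq_mul, ← hmeanY1]
      ring
    simp only [mean, hs, zero_div]
  have hm0 : mean ε0 = 0 := by
    have hs : ∑ i, ε0 i = 0 := by
      rw [Finset.sum_congr rfl fun i _ => hε0 i]
      rw [Finset.sum_sub_distrib, Finset.sum_sub_distrib, hB0,
        Finset.sum_const, card_univ, Fintype.card_fin, nsmul_eq_mul, ← hmeanY0]
      ring
    simp only [mean, hs, zero_div]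
  have hmsub : mean (fun i => Y1 i - Y0 i) = mean Y1 - mean Y0 := by
    simp only [mean, Finset.sum_sub_distrib, sub_div]
  have hmεsub : mean (fun i => ε1 i - ε0 i) = 0 := by
    simp only [mean, Finset.sum_sub_distrib, sub_div]
    rw [show (∑ i, ε1 i) / (N:ℝ) = mean ε1 from rfl,
        show (∑ i, ε0 i) / (N:ℝ) = mean ε0 from rfl, hm1, hm0, sub_zero]
  -- S2 expansions
  have h1 : S2 Y1 = c * ∑ i, (ε1 i + A i) ^ 2 := by
    simp only [S2, ← hc]
    congr 1
    refine Finset.sum_congr rfl fun i _ => ?_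
    rw [hε1 i]; ring
  have h2 : S2 Y0 = c * ∑ i, (ε0 i + B i) ^ 2 := by
    simp only [S2, ← hc]
    congr 1
    refine Finset.sum_congr rfl fun i _ => ?_
    rw [hε0 i]; ring
  have h3 : S2 (fun i => Y1 i - Y0 i) = c * ∑ i, ((ε1 i + A i) - (ε0 i + B i)) ^ 2 := by
    simp only [S2, ← hc, hmsub]
    congr 1
    refine Finset.sum_congr rfl fun i _ => ?_
    rw [hε1 i, hε0 i]; ring
  have h4 : S2 ε1 = c * ∑ i, (ε1 i) ^ 2 := by
    simp only [S2, ← hc, hm1, sub_zero]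
  have h5 : S2 ε0 = c * ∑ i, (ε0 i) ^ 2 := by
    simp only [S2, ← hc, hm0, sub_zero]
  have h6 : S2 (fun i => ε1 i - ε0 i) = c * ∑ i, (ε1 i - ε0 i) ^ 2 := by
    simp only [S2, ← hc, hmεsub, sub_zero]
  -- quadratic form
  have h7 : ∑ j, ∑ l, βt j * S2X j l * βt l = c * ∑ i, (C i) ^ 2 := by
    have key : ∑ i, (C i) ^ 2 = ∑ j, ∑ l, βt j * βt l * ∑ i, d i j * d i l := by
      calc ∑ i, (C i) ^ 2
          = ∑ i, ∑ j, ∑ l, (d i j * βt j) * (d i l * βt l) := by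
            refine Finset.sum_congr rfl fun i _ => ?_
            rw [hC]; rw [sq, Finset.sum_mul_sum]
        _ = ∑ j, ∑ i, ∑ l, (d i j * βt j) * (d i l * βt l) := Finset.sum_comm
        _ = ∑ j, ∑ l, ∑ i, (d i j * βt j) * (d i l * βt l) :=
            Finset.sum_congr rfl fun j _ => Finset.sum_comm
        _ = ∑ j, ∑ l, βt j * βt l * ∑ i, d i j * d i l := by
            refine Finset.sum_congr rfl fun j _ => Finset.sum_congr rfl fun l _ => ?_
            rw [Finset.mul_sum]
            exact Finset.sum_congr rfl fun i _ => by ring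
    rw [key, Finset.mul_sum]
    refine Finset.sum_congr rfl fun j _ => ?_
    rw [Finset.mul_sum]
    refine Finset.sum_congr rfl fun l _ => ?_
    simp only [S2X, ← hc, ← hd]
    ring
  -- covariance term
  have hSX1 : ∀ j, SX ε1 j = c * ∑ i, d i j * ε1 i := by
    intro j; simp only [SX, ← hc, hm1, sub_zero, ← hd]; rfl
  have hSX0 : ∀ j, SX ε0 j = c * ∑ i, d i j * ε0 i := by
    intro j; simp only [SX, ← hc, hm0, sub_zero, ← hd]; rfl
  have hswap : ∀ (u : Fin N → ℝ), ∑ j, (∑ i, d i j * u i) * βt j = ∑ i, u i * C i := by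
    intro u
    calc ∑ j, (∑ i, d i j * u i) * βt j
        = ∑ j, ∑ i, d i j * u i * βt j := by
          refine Finset.sum_congr rfl fun j _ => Finset.sum_mul _ _ _
      _ = ∑ i, ∑ j, d i j * u i * βt j := Finset.sum_comm
      _ = ∑ i, u i * C i := by
          refine Finset.sum_congr rfl fun i _ => ?_
          rw [hC, Finset.mul_sum]
          exact Finset.sum_congr rfl fun j _ => by ring
  have h8 : ∑ j, (SX ε1 j / e + SX ε0 j / (1 - e)) * βt j
      = (c * ∑ i, ε1 i * C i) / e + (c * ∑ i, ε0 i * C i) / (1 - e) := by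
    calc ∑ j, (SX ε1 j / e + SX ε0 j / (1 - e)) * βt j
        = ∑ j, ((c * ∑ i, d i j * ε1 i) / e * βt j
            + (c * ∑ i, d i j * ε0 i) / (1 - e) * βt j) := by
          refine Finset.sum_congr rfl fun j _ => ?_
          rw [hSX1 j, hSX0 j]; ring
      _ = (c * ∑ j, (∑ i, d i j * ε1 i) * βt j) / e
            + (c * ∑ j, (∑ i, d i j * ε0 i) * βt j) / (1 - e) := by
          rw [Finset.sum_add_distrib, Finset.mul_sum, Finset.mul_sum,
            Finset.sum_div, Finset.sum_div]
          congr 1 <;> exact Finset.sum_congr rfl fun j _ => by ring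
      _ = (c * ∑ i, ε1 i * C i) / e + (c * ∑ i, ε0 i * C i) / (1 - e) := by
          rw [hswap, hswap]
  -- linear combination per unit
  have hCi : ∀ i, C i = (1 - e) * A i + e * B i := by
    intro i
    rw [hC, hA, hB]
    simp only
    rw [Finset.mul_sum, Finset.mul_sum, ← Finset.sum_add_distrib]
    refine Finset.sum_congr rfl fun j _ => ?_
    simp only [βt]; ring
  have key : ∀ i, (ε1 i + A i) ^ 2 / e + (ε0 i + B i) ^ 2 / (1 - e)
      - ((ε1 i + A i) - (ε0 i + B i)) ^ 2
      - ((ε1 i) ^ 2 / e + (ε0 i) ^ 2 / (1 - e) - (ε1 i - ε0 i) ^ 2)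
      = (C i) ^ 2 / (e * (1 - e)) + 2 * (ε1 i * C i) / e + 2 * (ε0 i * C i) / (1 - e) := by
    intro i
    rw [hCi i]
    field_simp
    ring
  have hsum := Finset.sum_congr rfl fun i (_ : i ∈ (univ : Finset (Fin N))) => key i
  simp only [Finset.sum_add_distrib, Finset.sum_sub_distrib, ← Finset.sum_div,
    ← Finset.mul_sum] at hsum
  rw [h1, h2, h3, h4, h5, h6, h7, h8]
  linear_combination c * hsum
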